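/- For r ∈ (1, √3) define k(r) = √((1 + r²)(3 − r²))/(2r) (so k(r) ∈ (0,1)), and define A(r) = ((1 − r²)/(2r))·K(k(r)) + r·E(k(r)), where K and E are the complete elliptic integrals of the first and second kind. Then A is differentiable on (1, √3) with A′(r) = ((1 + r²)/(3 + r²))·E(k(r)) + ((r² − 1)/(3 − r²))·(K(k(r)) − E(k(r))); moreover A′(r) > 1/2 for all r ∈ (1, √3), and consequently A is strictly increasing on (1, √3). -/

import Mathlib

open Real

/-- The complete elliptic integral of the first kind. -/
noncomputable def ellipticK (k : ℝ) : ℝ :=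
  ∫ x in (0 : ℝ)..(π / 2), (Real.sqrt (1 - k ^ 2 * Real.sin x ^ 2))⁻¹

/-- The complete elliptic integral of the second kind. -/
noncomputable def ellipticE (k : ℝ) : ℝ :=
  ∫ x in (0 : ℝ)..(π / 2), Real.sqrt (1 - k ^ 2 * Real.sin x ^ 2)

/-- The modulus `k(r) = √((1+r²)(3−r²))/(2r)`. -/
noncomputable def kmod (r : ℝ) : ℝ := Real.sqrt ((1 + r ^ 2) * (3 - r ^ 2)) / (2 * r)

/-- The (half-)area function `A(r)`. -/
noncomputable def Afun (r : ℝ) : ℝ :=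
  ((1 - r ^ 2) / (2 * r)) * ellipticK (kmod r) + r * ellipticE (kmod r)

namespace Stmt4Aux

open intervalIntegral MeasureTheory

noncomputable def Pf (r : ℝ) : ℝ := (1 + r ^ 2) * (3 - r ^ 2) / (4 * r ^ 2)
noncomputable def vf (r x : ℝ) : ℝ := 1 - Pf r * Real.sin x ^ 2
noncomputable def Ff (r x : ℝ) : ℝ :=
  ((1 - r ^ 2) / (2 * r)) * (Real.sqrt (vf r x))⁻¹ + r * Real.sqrt (vf r x)
noncomputable def F'f (r x : ℝ) : ℝ :=
  (-(1 + r ^ 2) / (2 * r ^ 2)) * (Real.sqrt (vf r x))⁻¹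
    - ((1 - r ^ 2) / (2 * r)) * ((3 + r ^ 4) / (2 * r ^ 3) * Real.sin x ^ 2) /
        (2 * Real.sqrt (vf r x) ^ 3)
    + Real.sqrt (vf r x)
    + r * ((3 + r ^ 4) / (2 * r ^ 3) * Real.sin x ^ 2) / (2 * Real.sqrt (vf r x))
noncomputable def W'f (r x : ℝ) : ℝ :=
  (Real.cos x ^ 2 - Real.sin x ^ 2) * (Real.sqrt (vf r x))⁻¹
    + Pf r * (Real.sin x ^ 2 * Real.cos x ^ 2) / Real.sqrt (vf r x) ^ 3

lemma Pf_pos {r : ℝ} (hr : 1 < r) (hr3 : r ^ 2 < 3) : 0 < Pf r := by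
  have h1 : (0:ℝ) < 1 + r ^ 2 := by positivity
  have h2 : (0:ℝ) < 3 - r ^ 2 := by nlinarith
  exact div_pos (mul_pos h1 h2) (by positivity)

lemma Pf_lt_one {r : ℝ} (hr : 1 < r) (hr3 : r ^ 2 < 3) : Pf r < 1 := by
  rw [Pf, div_lt_one (by positivity)]
  nlinarith [mul_pos (show (0:ℝ) < r ^ 2 - 1 by nlinarith)
    (show (0:ℝ) < r ^ 2 + 3 by positivity)]

lemma vf_pos {r : ℝ} (hr : 1 < r) (hr3 : r ^ 2 < 3) (x : ℝ) : 0 < vf r x := by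
  have h1 : Pf r * Real.sin x ^ 2 ≤ Pf r * 1 := by
    have := Pf_pos hr hr3
    have := Real.sin_sq_le_one x
    nlinarith
  have := Pf_lt_one hr hr3
  simp only [vf]; nlinarith

lemma vf_le_one {r : ℝ} (hr : 1 < r) (hr3 : r ^ 2 < 3) (x : ℝ) : vf r x ≤ 1 := by
  have h0 : 0 ≤ Pf r * Real.sin x ^ 2 := by
    have := (Pf_pos hr hr3).le; positivity
  simp only [vf]; linarith

lemma sqrt_vf_ne {r : ℝ} (hr : 1 < r) (hr3 : r ^ 2 < 3) (x : ℝ) :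
    Real.sqrt (vf r x) ≠ 0 := (Real.sqrt_pos.mpr (vf_pos hr hr3 x)).ne'

lemma mem_Ioo_sq {r : ℝ} (h : r ∈ Set.Ioo (1:ℝ) (Real.sqrt 3)) : 1 < r ∧ r ^ 2 < 3 := by
  obtain ⟨h1, h2⟩ := h
  refine ⟨h1, ?_⟩
  have : r ^ 2 < Real.sqrt 3 ^ 2 := by
    apply pow_lt_pow_left₀ h2 (by linarith)
    norm_num
  rwa [Real.sq_sqrt (by norm_num : (0:ℝ) ≤ 3)] at this

lemma kmod_sq {r : ℝ} (hr : 1 < r) (hr3 : r ^ 2 < 3) : kmod r ^ 2 = Pf r := by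
  rw [kmod, Pf, div_pow, Real.sq_sqrt (by nlinarith)]
  ring_nf

lemma ellipticK_eq {r : ℝ} (hr : 1 < r) (hr3 : r ^ 2 < 3) :
    ellipticK (kmod r) = ∫ x in (0:ℝ)..(π / 2), (Real.sqrt (vf r x))⁻¹ := by
  rw [ellipticK]
  simp only [kmod_sq hr hr3, vf]

lemma ellipticE_eq {r : ℝ} (hr : 1 < r) (hr3 : r ^ 2 < 3) :
    ellipticE (kmod r) = ∫ x in (0:ℝ)..(π / 2), Real.sqrt (vf r x) := by
  rw [ellipticE]
  simp only [kmod_sq hr hr3, vf]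

lemma alg {r S t : ℝ} (hr : 1 < r) (hr3 : r ^ 2 < 3) (ht : t ≠ 0)
    (hv : t ^ 2 = 1 - Pf r * S) :
    (-(1 + r ^ 2) / (2 * r ^ 2)) * t⁻¹
      - ((1 - r ^ 2) / (2 * r)) * ((3 + r ^ 4) / (2 * r ^ 3) * S) / (2 * t ^ 3)
      + t + r * ((3 + r ^ 4) / (2 * r ^ 3) * S) / (2 * t)
    = (r ^ 2 - 1) / (3 - r ^ 2) * t⁻¹
      + ((1 + r ^ 2) / (3 + r ^ 2) - (r ^ 2 - 1) / (3 - r ^ 2)) * t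
      + (-(3 + r ^ 4) / (2 * r ^ 2 * (r ^ 2 + 3))) *
          ((1 - 2 * S) * t⁻¹ + Pf r * (S * (1 - S)) / t ^ 3) := by
  have hr0 : r ≠ 0 := by nlinarith
  have h1 : (1:ℝ) + r ^ 2 ≠ 0 := by positivity
  have h2 : (3:ℝ) - r ^ 2 ≠ 0 := by nlinarith
  have h3 : (3:ℝ) + r ^ 2 ≠ 0 := by positivity
  have hS : S = (1 - t ^ 2) * (4 * r ^ 2) / ((1 + r ^ 2) * (3 - r ^ 2)) := by
    rw [Pf] at hv
    field_simp at hv ⊢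
    linarith
  rw [Pf, hS]
  field_simp
  ring

/-- Derivative of `F` in `r`. -/
lemma hasDerivAt_F {x r : ℝ} (hr : 1 < r) (hr3 : r ^ 2 < 3) :
    HasDerivAt (fun s => Ff s x) (F'f r x) r := by
  have hr0 : r ≠ 0 := by nlinarith
  have hv := vf_pos hr hr3 x
  have ht : Real.sqrt (vf r x) ≠ 0 := sqrt_vf_ne hr hr3 x
  have hnum : HasDerivAt (fun s : ℝ => (1 + s ^ 2) * (3 - s ^ 2))
      (2 * r * (3 - r ^ 2) + (1 + r ^ 2) * (-(2 * r))) r := by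
    have h1 : HasDerivAt (fun s : ℝ => 1 + s ^ 2) (2 * r) r := by
      simpa using (hasDerivAt_pow 2 r).const_add 1
    have h2 : HasDerivAt (fun s : ℝ => 3 - s ^ 2) (-(2 * r)) r := by
      simpa using (hasDerivAt_pow 2 r).const_sub 3
    exact h1.mul h2
  have hden : HasDerivAt (fun s : ℝ => 4 * s ^ 2) (4 * (2 * r)) r := by
    simpa using (hasDerivAt_pow 2 r).const_mul 4
  have hP : HasDerivAt Pf (-((3 + r ^ 4) / (2 * r ^ 3))) r := by
    have h := hnum.fun_div hden (by positivity)
    refine h.congr_deriv ?_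
    field_simp
    ring
  have hvx : HasDerivAt (fun s => vf s x)
      ((3 + r ^ 4) / (2 * r ^ 3) * Real.sin x ^ 2) r := by
    have := (hP.mul_const (Real.sin x ^ 2)).const_sub 1
    simpa [vf] using this
  have hsq : HasDerivAt (fun s => Real.sqrt (vf s x))
      ((3 + r ^ 4) / (2 * r ^ 3) * Real.sin x ^ 2 / (2 * Real.sqrt (vf r x))) r :=
    hvx.sqrt hv.ne'
  have hinv : HasDerivAt (fun s => (Real.sqrt (vf s x))⁻¹)
      (-((3 + r ^ 4) / (2 * r ^ 3) * Real.sin x ^ 2 / (2 * Real.sqrt (vf r x))) /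
        Real.sqrt (vf r x) ^ 2) r := hsq.inv ht
  have hp : HasDerivAt (fun s : ℝ => (1 - s ^ 2) / (2 * s))
      (-(1 + r ^ 2) / (2 * r ^ 2)) r := by
    have h1 : HasDerivAt (fun s : ℝ => 1 - s ^ 2) (-(2 * r)) r := by
      simpa using (hasDerivAt_pow 2 r).const_sub 1
    have h2 : HasDerivAt (fun s : ℝ => 2 * s) 2 r := by
      simpa using (hasDerivAt_id r).const_mul 2
    have h := h1.fun_div h2 (by positivity)
    refine h.congr_deriv ?_
    field_simp
    ring
  have h := (hp.fun_mul hinv).fun_add ((hasDerivAt_id r).fun_mul hsq)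
  refine h.congr_deriv ?_
  simp only [F'f, id_eq]
  set t := Real.sqrt (vf r x) with htdef
  field_simp
  ring

/-- Derivative of `W = sin·cos·(√v)⁻¹` in `x`. -/
lemma hasDerivAt_W {r : ℝ} (hr : 1 < r) (hr3 : r ^ 2 < 3) (x : ℝ) :
    HasDerivAt (fun y => Real.sin y * Real.cos y * (Real.sqrt (vf r y))⁻¹)
      (W'f r x) x := by
  have hv := vf_pos hr hr3 x
  have ht : Real.sqrt (vf r x) ≠ 0 := sqrt_vf_ne hr hr3 x
  have hvx : HasDerivAt (fun y => vf r y)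
      (-(Pf r * (2 * Real.sin x * Real.cos x))) x := by
    have h1 : HasDerivAt (fun y : ℝ => Real.sin y ^ 2)
        (2 * Real.sin x * Real.cos x) x := by
      simpa using (Real.hasDerivAt_sin x).fun_pow 2
    simpa [vf] using (h1.const_mul (Pf r)).const_sub 1
  have hsq := hvx.sqrt hv.ne'
  have hinv := hsq.fun_inv ht
  have h := ((Real.hasDerivAt_sin x).fun_mul (Real.hasDerivAt_cos x)).fun_mul hinv
  refine h.congr_deriv ?_
  simp only [W'f]
  set t := Real.sqrt (vf r x) with htdef
  field_simp
  ring

lemma cont_sqrt (r : ℝ) : Continuous fun x => Real.sqrt (vf r x) := by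
  unfold vf; fun_prop

lemma cont_inv {r : ℝ} (hr : 1 < r) (hr3 : r ^ 2 < 3) :
    Continuous fun x => (Real.sqrt (vf r x))⁻¹ :=
  (cont_sqrt r).inv₀ (sqrt_vf_ne hr hr3)

lemma cont_Ff {r : ℝ} (hr : 1 < r) (hr3 : r ^ 2 < 3) : Continuous (Ff r) := by
  unfold Ff
  exact (continuous_const.mul (cont_inv hr hr3)).add (continuous_const.mul (cont_sqrt r))

lemma cont_W'f {r : ℝ} (hr : 1 < r) (hr3 : r ^ 2 < 3) : Continuous (W'f r) := by
  unfold W'f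
  refine (Continuous.mul (by fun_prop) (cont_inv hr hr3)).add ?_
  exact Continuous.div (by fun_prop) ((cont_sqrt r).pow 3)
    fun x => pow_ne_zero 3 (sqrt_vf_ne hr hr3 x)

lemma cont_F'f {r : ℝ} (hr : 1 < r) (hr3 : r ^ 2 < 3) : Continuous (F'f r) := by
  unfold F'f
  refine (((continuous_const.mul (cont_inv hr hr3)).sub ?_).add (cont_sqrt r)).add ?_
  · exact Continuous.div (by fun_prop) (continuous_const.mul ((cont_sqrt r).pow 3))
      fun x => mul_ne_zero two_ne_zero (pow_ne_zero 3 (sqrt_vf_ne hr hr3 x))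
  · exact Continuous.div (by fun_prop) (continuous_const.mul (cont_sqrt r))
      fun x => mul_ne_zero two_ne_zero (sqrt_vf_ne hr hr3 x)

lemma contOn_F' :
    ContinuousOn (fun p : ℝ × ℝ => F'f p.1 p.2)
      {p : ℝ × ℝ | 1 < p.1 ∧ p.1 ^ 2 < 3} := by
  have h1 : ∀ p : ℝ × ℝ, p ∈ {p : ℝ × ℝ | 1 < p.1 ∧ p.1 ^ 2 < 3} → p.1 ≠ 0 :=
    fun p hp => by have := hp.1; nlinarith
  have hts : ContinuousOn (fun p : ℝ × ℝ => Real.sqrt (vf p.1 p.2))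
      {p : ℝ × ℝ | 1 < p.1 ∧ p.1 ^ 2 < 3} := by
    apply ContinuousOn.sqrt
    unfold vf Pf
    exact continuousOn_const.sub ((ContinuousOn.div (by fun_prop) (by fun_prop)
      fun p hp => by have := h1 p hp; positivity).mul (by fun_prop))
  have ht0 : ∀ p ∈ {p : ℝ × ℝ | 1 < p.1 ∧ p.1 ^ 2 < 3},
      Real.sqrt (vf p.1 p.2) ≠ 0 := fun p hp => sqrt_vf_ne hp.1 hp.2 p.2
  have hti := hts.inv₀ ht0
  unfold F'f
  refine (((ContinuousOn.mul ?_ hti).sub ?_).add hts).add ?_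
  · exact ContinuousOn.div (by fun_prop) (by fun_prop)
      fun p hp => by have := h1 p hp; positivity
  · refine ContinuousOn.div ?_ (continuousOn_const.mul (hts.pow 3))
      fun p hp => mul_ne_zero two_ne_zero (pow_ne_zero 3 (ht0 p hp))
    exact ContinuousOn.mul
      (ContinuousOn.div (by fun_prop) (by fun_prop)
        fun p hp => by have := h1 p hp; positivity)
      ((ContinuousOn.div (by fun_prop) (by fun_prop)
        fun p hp => by have := h1 p hp; positivity).mul (by fun_prop))
  · refine ContinuousOn.div ?_ (continuousOn_const.mul hts)
      fun p hp => mul_ne_zero two_ne_zero (ht0 p hp)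
    exact ContinuousOn.mul (by fun_prop)
      ((ContinuousOn.div (by fun_prop) (by fun_prop)
        fun p hp => by have := h1 p hp; positivity).mul (by fun_prop))

lemma integral_W' {r : ℝ} (hr : 1 < r) (hr3 : r ^ 2 < 3) :
    ∫ x in (0:ℝ)..(π / 2), W'f r x = 0 := by
  rw [intervalIntegral.integral_eq_sub_of_hasDerivAt
    (f := fun y => Real.sin y * Real.cos y * (Real.sqrt (vf r y))⁻¹)
    (fun x _ => hasDerivAt_W hr hr3 x)
    ((cont_W'f hr hr3).intervalIntegrable 0 (π / 2))]
  simp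

lemma integral_F'_eq {r : ℝ} (hr : 1 < r) (hr3 : r ^ 2 < 3) :
    ∫ x in (0:ℝ)..(π / 2), F'f r x
      = (r ^ 2 - 1) / (3 - r ^ 2) * (∫ x in (0:ℝ)..(π / 2), (Real.sqrt (vf r x))⁻¹)
        + ((1 + r ^ 2) / (3 + r ^ 2) - (r ^ 2 - 1) / (3 - r ^ 2)) *
            (∫ x in (0:ℝ)..(π / 2), Real.sqrt (vf r x)) := by
  have hpt : ∀ x, F'f r x
      = ((r ^ 2 - 1) / (3 - r ^ 2) * (Real.sqrt (vf r x))⁻¹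
          + ((1 + r ^ 2) / (3 + r ^ 2) - (r ^ 2 - 1) / (3 - r ^ 2)) * Real.sqrt (vf r x))
        + (-(3 + r ^ 4) / (2 * r ^ 2 * (r ^ 2 + 3))) * W'f r x := by
    intro x
    have hv := vf_pos hr hr3 x
    have ht := sqrt_vf_ne hr hr3 x
    have ht2 : Real.sqrt (vf r x) ^ 2 = 1 - Pf r * Real.sin x ^ 2 := by
      rw [Real.sq_sqrt hv.le]; rfl
    have halg := alg hr hr3 ht ht2
    simp only [F'f, W'f, Real.cos_sq']
    linear_combination halg
  have i1 : IntervalIntegrable (fun x => (Real.sqrt (vf r x))⁻¹) volume 0 (π / 2) :=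
    (cont_inv hr hr3).intervalIntegrable _ _
  have i2 : IntervalIntegrable (fun x => Real.sqrt (vf r x)) volume 0 (π / 2) :=
    (cont_sqrt r).intervalIntegrable _ _
  have i3 : IntervalIntegrable (W'f r) volume 0 (π / 2) :=
    (cont_W'f hr hr3).intervalIntegrable _ _
  simp only [hpt]
  rw [intervalIntegral.integral_add ((i1.const_mul _).add (i2.const_mul _)) (i3.const_mul _),
    intervalIntegral.integral_add (i1.const_mul _) (i2.const_mul _),
    intervalIntegral.integral_const_mul, intervalIntegral.integral_const_mul,
    intervalIntegral.integral_const_mul, integral_W' hr hr3, mul_zero, add_zero]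

lemma Afun_eq {r : ℝ} (hr : 1 < r) (hr3 : r ^ 2 < 3) :
    Afun r = ∫ x in (0:ℝ)..(π / 2), Ff r x := by
  have i1 : IntervalIntegrable (fun x => (Real.sqrt (vf r x))⁻¹) volume 0 (π / 2) :=
    (cont_inv hr hr3).intervalIntegrable _ _
  have i2 : IntervalIntegrable (fun x => Real.sqrt (vf r x)) volume 0 (π / 2) :=
    (cont_sqrt r).intervalIntegrable _ _
  rw [Afun, ellipticK_eq hr hr3, ellipticE_eq hr hr3, ← intervalIntegral.integral_const_mul,
    ← intervalIntegral.integral_const_mul,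
    ← intervalIntegral.integral_add (i1.const_mul _) (i2.const_mul _)]
  rfl

/-- The main derivative computation. -/
lemma main_deriv {r₀ : ℝ} (h : r₀ ∈ Set.Ioo (1:ℝ) (Real.sqrt 3)) :
    HasDerivAt Afun
      (((1 + r₀ ^ 2) / (3 + r₀ ^ 2)) * ellipticE (kmod r₀) +
        ((r₀ ^ 2 - 1) / (3 - r₀ ^ 2)) * (ellipticK (kmod r₀) - ellipticE (kmod r₀))) r₀ := by
  obtain ⟨hr, hr3⟩ := mem_Ioo_sq h
  have h3 : r₀ < Real.sqrt 3 := h.2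
  set ε := min ((r₀ - 1) / 2) ((Real.sqrt 3 - r₀) / 2) with hεdef
  have hε : 0 < ε := by
    apply lt_min <;> linarith [h.1, h.2]
  have hball : ∀ s ∈ Metric.ball r₀ ε, 1 < s ∧ s ^ 2 < 3 := by
    intro s hs
    rw [Metric.mem_ball, Real.dist_eq, abs_lt] at hs
    have e1 : ε ≤ (r₀ - 1) / 2 := min_le_left _ _
    have e2 : ε ≤ (Real.sqrt 3 - r₀) / 2 := min_le_right _ _
    have h1 : 1 < s := by linarith [hs.1]
    have h2 : s < Real.sqrt 3 := by linarith [hs.2]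
    refine ⟨h1, ?_⟩
    have := pow_lt_pow_left₀ h2 (by linarith) two_ne_zero
    rwa [Real.sq_sqrt (by norm_num : (0:ℝ) ≤ 3)] at this
  have hKU : Set.Icc (r₀ - ε) (r₀ + ε) ×ˢ Set.Icc (0:ℝ) (π / 2)
      ⊆ {p : ℝ × ℝ | 1 < p.1 ∧ p.1 ^ 2 < 3} := by
    rintro ⟨s, x⟩ ⟨hs, -⟩
    have e1 : ε ≤ (r₀ - 1) / 2 := min_le_left _ _
    have e2 : ε ≤ (Real.sqrt 3 - r₀) / 2 := min_le_right _ _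
    have h1 : 1 < s := by have := hs.1; simp only at this ⊢; linarith
    have h2 : s < Real.sqrt 3 := by have := hs.2; linarith
    refine ⟨h1, ?_⟩
    have := pow_lt_pow_left₀ h2 (by linarith) two_ne_zero
    rwa [Real.sq_sqrt (by norm_num : (0:ℝ) ≤ 3)] at this
  obtain ⟨M, hM⟩ := (isCompact_Icc.prod isCompact_Icc).exists_bound_of_continuousOn
    (contOn_F'.mono hKU)
  have hIoc : Set.uIoc (0:ℝ) (π / 2) = Set.Ioc (0:ℝ) (π / 2) :=
    Set.uIoc_of_le (by positivity)
  have key := intervalIntegral.hasDerivAt_integral_of_dominated_loc_of_deriv_le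
    (F := Ff) (F' := F'f) (x₀ := r₀) (a := (0:ℝ)) (b := π / 2)
    (bound := fun _ => M) (μ := volume) (Metric.ball_mem_nhds r₀ hε)
    ?_ ?_ ?_ ?_ ?_ ?_
  · have hD := key.2
    rw [integral_F'_eq hr hr3] at hD
    have hAE : Afun =ᶠ[nhds r₀] fun s => ∫ x in (0:ℝ)..(π / 2), Ff s x := by
      filter_upwards [isOpen_Ioo.mem_nhds h] with s hs
      exact Afun_eq (mem_Ioo_sq hs).1 (mem_Ioo_sq hs).2
    have hD' := hD.congr_of_eventuallyEq hAE
    refine hD'.congr_deriv ?_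
    rw [ellipticK_eq hr hr3, ellipticE_eq hr hr3]
    ring
  · filter_upwards [isOpen_Ioo.mem_nhds h] with s hs
    exact ((cont_Ff (mem_Ioo_sq hs).1 (mem_Ioo_sq hs).2)).aestronglyMeasurable.restrict
  · exact (cont_Ff hr hr3).intervalIntegrable _ _
  · exact (cont_F'f hr hr3).aestronglyMeasurable.restrict
  · refine Filter.Eventually.of_forall fun x hx s hs => ?_
    rw [hIoc] at hx
    refine hM (s, x) ⟨?_, Set.Ioc_subset_Icc_self hx⟩
    rw [Metric.mem_ball, Real.dist_eq, abs_lt] at hs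
    exact ⟨by linarith [hs.1], by linarith [hs.2]⟩
  · exact intervalIntegrable_const
  · refine Filter.Eventually.of_forall fun x _ s hs => ?_
    exact hasDerivAt_F (hball s hs).1 (hball s hs).2

/-- `E(k) ≥ 1`. -/
lemma one_le_E {r : ℝ} (hr : 1 < r) (hr3 : r ^ 2 < 3) : 1 ≤ ellipticE (kmod r) := by
  rw [ellipticE_eq hr hr3]
  have hc : ∫ x in (0:ℝ)..(π / 2), Real.cos x = 1 := by
    simp [integral_cos]
  rw [← hc]
  apply intervalIntegral.integral_mono_on (by positivity)
    (Real.continuous_cos.intervalIntegrable _ _)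
    ((cont_sqrt r).intervalIntegrable _ _)
  intro x hx
  have hcos : 0 ≤ Real.cos x :=
    Real.cos_nonneg_of_mem_Icc ⟨by linarith [hx.1, Real.pi_pos], hx.2⟩
  have h1 : Real.cos x = Real.sqrt (Real.cos x ^ 2) := (Real.sqrt_sq hcos).symm
  rw [h1]
  apply Real.sqrt_le_sqrt
  rw [Real.cos_sq']
  have hP := Pf_lt_one hr hr3
  have hs := Real.sin_sq_le_one x
  have hs0 : 0 ≤ Real.sin x ^ 2 := sq_nonneg _
  simp only [vf]
  nlinarith

/-- `E(k) ≤ K(k)`. -/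
lemma E_le_K {r : ℝ} (hr : 1 < r) (hr3 : r ^ 2 < 3) :
    ellipticE (kmod r) ≤ ellipticK (kmod r) := by
  rw [ellipticE_eq hr hr3, ellipticK_eq hr hr3]
  apply intervalIntegral.integral_mono_on (by positivity)
    ((cont_sqrt r).intervalIntegrable _ _)
    ((cont_inv hr hr3).intervalIntegrable _ _)
  intro x _
  have hv := vf_pos hr hr3 x
  have hv1 := vf_le_one hr hr3 x
  have ht : 0 < Real.sqrt (vf r x) := Real.sqrt_pos.mpr hv
  have ht1 : Real.sqrt (vf r x) ≤ 1 := by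
    rw [show (1:ℝ) = Real.sqrt 1 by simp]
    exact Real.sqrt_le_sqrt hv1
  rw [← one_div, le_div_iff₀ ht]
  nlinarith

lemma deriv_gt {r : ℝ} (hr : 1 < r) (hr3 : r ^ 2 < 3) :
    ((1 + r ^ 2) / (3 + r ^ 2)) * ellipticE (kmod r) +
      ((r ^ 2 - 1) / (3 - r ^ 2)) * (ellipticK (kmod r) - ellipticE (kmod r)) > 1 / 2 := by
  have hE := one_le_E hr hr3
  have hKE := E_le_K hr hr3
  have hc1 : (1:ℝ) / 2 < (1 + r ^ 2) / (3 + r ^ 2) := by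
    rw [div_lt_div_iff₀ (by norm_num) (by positivity)]
    nlinarith
  have hc2 : 0 ≤ (r ^ 2 - 1) / (3 - r ^ 2) := by
    apply div_nonneg <;> nlinarith
  have h2 : 0 ≤ ((r ^ 2 - 1) / (3 - r ^ 2)) * (ellipticK (kmod r) - ellipticE (kmod r)) :=
    mul_nonneg hc2 (by linarith)
  have h1 : (1 + r ^ 2) / (3 + r ^ 2) ≤ ((1 + r ^ 2) / (3 + r ^ 2)) * ellipticE (kmod r) := by
    nlinarith
  linarith

end Stmt4Aux

/-- derivative formula and monotonicity of `A` on `(1, √3)`. -/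
theorem stmt_4 :
    (∀ r ∈ Set.Ioo (1 : ℝ) (Real.sqrt 3), kmod r ∈ Set.Ioo (0 : ℝ) 1) ∧
    (∀ r ∈ Set.Ioo (1 : ℝ) (Real.sqrt 3),
      HasDerivAt Afun
        (((1 + r ^ 2) / (3 + r ^ 2)) * ellipticE (kmod r) +
          ((r ^ 2 - 1) / (3 - r ^ 2)) * (ellipticK (kmod r) - ellipticE (kmod r))) r) ∧
    (∀ r ∈ Set.Ioo (1 : ℝ) (Real.sqrt 3),
      ((1 + r ^ 2) / (3 + r ^ 2)) * ellipticE (kmod r) +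
        ((r ^ 2 - 1) / (3 - r ^ 2)) * (ellipticK (kmod r) - ellipticE (kmod r)) > 1 / 2) ∧
    StrictMonoOn Afun (Set.Ioo (1 : ℝ) (Real.sqrt 3)) := by
  refine ⟨?_, ?_, ?_, ?_⟩
  · intro r hr
    obtain ⟨h1, h3⟩ := Stmt4Aux.mem_Ioo_sq hr
    constructor
    · rw [kmod]
      apply div_pos (Real.sqrt_pos.mpr (by nlinarith)) (by linarith)
    · rw [kmod, div_lt_one (by linarith)]
      rw [show (2 * r : ℝ) = Real.sqrt ((2 * r) ^ 2) from
        (Real.sqrt_sq (by linarith)).symm]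
      apply Real.sqrt_lt_sqrt (by nlinarith)
      nlinarith [mul_pos (show (0:ℝ) < r ^ 2 - 1 by nlinarith)
        (show (0:ℝ) < r ^ 2 + 3 by positivity)]
  · intro r hr
    exact Stmt4Aux.main_deriv hr
  · intro r hr
    obtain ⟨h1, h3⟩ := Stmt4Aux.mem_Ioo_sq hr
    exact Stmt4Aux.deriv_gt h1 h3
  · apply strictMonoOn_of_deriv_pos (convex_Ioo _ _)
    · intro r hr
      exact (Stmt4Aux.main_deriv hr).differentiableAt.continuousAt.continuousWithinAt
    · intro r hr
      rw [interior_Ioo] at hr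
      obtain ⟨h1, h3⟩ := Stmt4Aux.mem_Ioo_sq hr
      rw [(Stmt4Aux.main_deriv hr).deriv]
      have := Stmt4Aux.deriv_gt h1 h3
      linarith
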